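/- In a finite poset X, a nonempty subset S has a maximum element (is rooted) if and only if for all downward-closed subsets A, B of X, S ⊆ A ∪ B implies S ⊆ A or S ⊆ B, where A, B range over downsets of the form ↓a for elements a of the lattice of downsets; equivalently: S is rooted iff for all downsets A, B ⊆ X, S ⊆ A ∪ B implies S ⊆ A or S ⊆ B. -/

import Mathlib

theorem stmt_14 {X : Type*} [PartialOrder X] [Fintype X]
    (S : Set X) (hS : S.Nonempty) :
    (∃ p ∈ S, ∀ q ∈ S, q ≤ p) ↔
      ∀ A B : Set X, IsLowerSet A → IsLowerSet B →
        S ⊆ A ∪ B → S ⊆ A ∨ S ⊆ B := by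
  constructor
  · rintro ⟨p, hp, hmax⟩ A B hA hB hAB
    rcases hAB hp with h | h
    · exact Or.inl fun q hq => hA (hmax q hq) h
    · exact Or.inr fun q hq => hB (hmax q hq) h
  · intro h
    classical
    have key : ∀ T : Finset X, S ⊆ (⋃ t ∈ T, {x | x ≤ t}) →
        ∃ t ∈ T, S ⊆ {x | x ≤ t} := by
      intro T
      induction T using Finset.induction with
      | empty =>
        intro hsub
        obtain ⟨s, hs⟩ := hS
        simpa using hsub hs
      | insert a T' hnotmem ih =>
        intro hsub
        have hA : IsLowerSet {x : X | x ≤ a} := fun x y hxy hx => le_trans hxy hx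
        have hB : IsLowerSet (⋃ t ∈ T', {x : X | x ≤ t}) := by
          apply isLowerSet_iUnion₂
          intro t _
          exact fun x y hxy hx => le_trans hxy hx
        have hsub' : S ⊆ {x | x ≤ a} ∪ (⋃ t ∈ T', {x | x ≤ t}) := by
          intro s hs
          rcases Set.mem_iUnion₂.mp (hsub hs) with ⟨t, ht, hst⟩
          rcases Finset.mem_insert.mp ht with rfl | ht'
          · exact Or.inl hst
          · exact Or.inr (Set.mem_iUnion₂.mpr ⟨t, ht', hst⟩)
        rcases h _ _ hA hB hsub' with h1 | h2
        · exact ⟨a, Finset.mem_insert_self a T', h1⟩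
        · obtain ⟨t, ht, hst⟩ := ih h2
          exact ⟨t, Finset.mem_insert_of_mem ht, hst⟩
    obtain ⟨t, ht, hst⟩ := key S.toFinset (by
      intro s hs
      exact Set.mem_iUnion₂.mpr ⟨s, Set.mem_toFinset.mpr hs, le_refl s⟩)
    exact ⟨t, Set.mem_toFinset.mp ht, fun q hq => hst hq⟩
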